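/- arXiv:1312.0925 — 4 statements merged into one kernel-verified Lean document; each statement's English description precedes it below -/
import Mathlib

section
/- (Local convergence of noisy subspace iteration.) Let A be a symmetric n×n real matrix with spectral decomposition A = UΛ_U Uᵀ + VΛ_V Vᵀ (U ∈ ℝ^{n×k}, V ∈ ℝ^{n×(n−k)} orthonormal, σ₁ ≥ … ≥ σ_n the absolute eigenvalues in non-increasing order). Consider the noisy subspace iteration: starting from an orthonormal X₀ ∈ ℝ^{n×k}, for ℓ = 1,…,L set Y_ℓ = A X_{ℓ−1} + G_ℓ and let X_ℓ be an orthonormal basis for the column span of Y_ℓ. Let 0 ≤ ε ≤ 1/4, Δ = max_{1≤ℓ≤L} ‖G_ℓ‖, and γ_k = 1 − σ_{k+1}/σ_k. Assume ‖Vᵀ X₀‖ ≤ 1/4 and σ_k ≥ 8Δ/(γ_k ε). Then ‖Vᵀ X_L‖ ≤ max{ ε, 2‖Vᵀ X₀‖ · exp(−γ_k L / 2) }. -/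
open Matrix

/-- The spectral (operator) norm of a real matrix. -/
noncomputable def specNorm {m n : Type*} [Fintype m] [Fintype n] [DecidableEq n]
    (A : Matrix m n ℝ) : ℝ :=
  ‖LinearMap.toContinuousLinearMap (Matrix.toEuclideanLin A)‖



namespace NSIAux
open scoped Matrix.Norms.L2Operator

variable {a b m p : ℕ}

/-- Euclidean norm of a plain vector. -/
noncomputable def en {m : ℕ} (x : Fin m → ℝ) : ℝ :=
  ‖(WithLp.equiv 2 (Fin m → ℝ)).symm x‖

lemma specNorm_eq (M : Matrix (Fin m) (Fin p) ℝ) : specNorm M = ‖M‖ := rfl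

lemma en_nonneg (x : Fin m → ℝ) : 0 ≤ en x := norm_nonneg _

lemma en_sq (x : Fin m → ℝ) : en x ^ 2 = x ⬝ᵥ x := by
  rw [en, EuclideanSpace.norm_eq, Real.sq_sqrt (by positivity)]
  simp [dotProduct, sq]

lemma en_eq_sqrt (x : Fin m → ℝ) : en x = Real.sqrt (x ⬝ᵥ x) := by
  rw [← en_sq, Real.sqrt_sq (en_nonneg x)]

lemma en_le_en {x : Fin a → ℝ} {y : Fin b → ℝ} (h : x ⬝ᵥ x ≤ y ⬝ᵥ y) : en x ≤ en y := by
  rw [en_eq_sqrt, en_eq_sqrt]; exact Real.sqrt_le_sqrt h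

lemma en_eq_en {x : Fin a → ℝ} {y : Fin b → ℝ} (h : x ⬝ᵥ x = y ⬝ᵥ y) : en x = en y := by
  rw [en_eq_sqrt, en_eq_sqrt, h]

lemma en_smul (c : ℝ) (x : Fin m → ℝ) : en (c • x) = |c| * en x := by
  rw [en, en, show (WithLp.equiv 2 (Fin m → ℝ)).symm (c • x)
      = c • (WithLp.equiv 2 (Fin m → ℝ)).symm x from rfl, norm_smul, Real.norm_eq_abs]

lemma en_neg (x : Fin m → ℝ) : en (-x) = en x := by
  have := en_smul (-1) x; simpa using this

lemma en_add_le (x y : Fin m → ℝ) : en (x + y) ≤ en x + en y := by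
  rw [en, en, en, show (WithLp.equiv 2 (Fin m → ℝ)).symm (x + y)
      = (WithLp.equiv 2 (Fin m → ℝ)).symm x + (WithLp.equiv 2 (Fin m → ℝ)).symm y from rfl]
  exact norm_add_le _ _

lemma en_add_ge (x y : Fin m → ℝ) : en x - en y ≤ en (x + y) := by
  have h := en_add_le (x + y) (-y)
  rw [en_neg] at h
  simpa using h

lemma en_mulVec_le (M : Matrix (Fin m) (Fin p) ℝ) (x : Fin p → ℝ) :
    en (M *ᵥ x) ≤ specNorm M * en x := by
  rw [specNorm_eq]
  exact M.l2_opNorm_mulVec ((WithLp.equiv 2 (Fin p → ℝ)).symm x)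

lemma specNorm_le_of (M : Matrix (Fin m) (Fin p) ℝ) {c : ℝ} (hc : 0 ≤ c)
    (h : ∀ x : Fin p → ℝ, en (M *ᵥ x) ≤ c * en x) : specNorm M ≤ c := by
  rw [specNorm]
  refine ContinuousLinearMap.opNorm_le_bound _ hc (fun x => ?_)
  simpa [Matrix.toEuclideanLin_apply, en] using h ((WithLp.equiv 2 (Fin p → ℝ)) x)

lemma specNorm_nonneg (M : Matrix (Fin m) (Fin p) ℝ) : 0 ≤ specNorm M := norm_nonneg _

lemma dot_mulVec_self (M : Matrix (Fin a) (Fin b) ℝ) (w : Fin b → ℝ) :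
    (M *ᵥ w) ⬝ᵥ (M *ᵥ w) = w ⬝ᵥ ((Mᵀ * M) *ᵥ w) := by
  rw [dotProduct_mulVec, vecMul_mulVec, dotProduct_mulVec]

lemma le_of_sq {x y : ℝ} (hx : 0 ≤ x) (hy : 0 ≤ y) (h : x ^ 2 ≤ y ^ 2) : x ≤ y := by
  nlinarith

lemma dot_smul_self (c : ℝ) (y : Fin m → ℝ) : (c • y) ⬝ᵥ (c • y) = c ^ 2 * (y ⬝ᵥ y) := by
  rw [smul_dotProduct, dotProduct_smul, smul_eq_mul, smul_eq_mul]; ring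

lemma en_orth {M : Matrix (Fin a) (Fin b) ℝ} (h : Mᵀ * M = 1) (v : Fin b → ℝ) :
    en (M *ᵥ v) = en v := by
  refine en_eq_en ?_
  rw [dot_mulVec_self, h, one_mulVec]

lemma en_diag_le {d : Fin m → ℝ} {c : ℝ} (hc : 0 ≤ c) (h : ∀ i, |d i| ≤ c)
    (x : Fin m → ℝ) : en ((Matrix.diagonal d) *ᵥ x) ≤ c * en x := by
  have hce : c * en x = en (c • x) := by rw [en_smul, abs_of_nonneg hc]
  rw [hce]
  refine en_le_en ?_
  rw [dot_smul_self]
  simp only [dotProduct, mulVec_diagonal, Finset.mul_sum]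
  refine Finset.sum_le_sum (fun i _ => ?_)
  have hd : d i ^ 2 ≤ c ^ 2 := by nlinarith [h i, abs_nonneg (d i), sq_abs (d i)]
  nlinarith [sq_nonneg (x i)]

lemma en_diag_ge {d : Fin m → ℝ} {c : ℝ} (hc : 0 ≤ c) (h : ∀ i, c ≤ |d i|)
    (x : Fin m → ℝ) : c * en x ≤ en ((Matrix.diagonal d) *ᵥ x) := by
  have hce : c * en x = en (c • x) := by rw [en_smul, abs_of_nonneg hc]
  rw [hce]
  refine en_le_en ?_
  rw [dot_smul_self]
  simp only [dotProduct, mulVec_diagonal, Finset.mul_sum]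
  refine Finset.sum_le_sum (fun i _ => ?_)
  have hd : c ^ 2 ≤ d i ^ 2 := by nlinarith [h i, abs_nonneg (d i), sq_abs (d i)]
  nlinarith [sq_nonneg (x i)]


lemma le_of_sq' {x y : ℝ} (hx : 0 ≤ x) (hy : 0 ≤ y) (h : x ^ 2 ≤ y ^ 2) : x ≤ y := by
  nlinarith

lemma hnum_core {ε Δ γ σk σk1 p r t tn : ℝ} (hε0 : 0 ≤ ε) (hε : ε ≤ 1/4)
    (hγ0 : 0 ≤ γ) (hγ1 : γ ≤ 1) (hσkpos : 0 < σk) (hσk1γ : σk1 = (1-γ)*σk)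
    (hΔ0 : 0 ≤ Δ) (hgap : 8*Δ ≤ γ*ε*σk)
    (ht : t = max ε p) (hp0 : 0 ≤ p) (htub : t ≤ 26/100)
    (hrge : 1 - γ/2 ≤ r) (hr0 : 0 < r)
    (htn1 : ε ≤ tn) (htn2 : p * r ≤ tn) :
    0 ≤ σk - 26/25*Δ ∧ σk1 * t + 26/25*Δ ≤ tn * (σk - 26/25*Δ) := by
  have hγε : γ * ε ≤ 1 * (1/4) := mul_le_mul hγ1 hε hε0 zero_le_one
  have hDe : 0 ≤ σk - 26/25*Δ := by
    have h2 : γ * ε * σk ≤ 1/4 * σk := by nlinarith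
    linarith
  refine ⟨hDe, ?_⟩
  rcases le_total p ε with hcase | hcase
  · have htval : t = ε := by rw [ht]; exact max_eq_left hcase
    have hstep : σk1 * ε + 26/25 * Δ ≤ ε * (σk - 26/25 * Δ) := by
      rw [hσk1γ]
      nlinarith [mul_nonneg hε0 hΔ0, mul_nonneg hγ0 (mul_nonneg hε0 hσkpos.le)]
    calc σk1 * t + 26/25 * Δ = σk1 * ε + 26/25 * Δ := by rw [htval]
      _ ≤ ε * (σk - 26/25 * Δ) := hstep
      _ ≤ tn * (σk - 26/25 * Δ) := mul_le_mul_of_nonneg_right htn1 hDe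
  · have htval : t = p := by rw [ht]; exact max_eq_right hcase
    have hεt : ε ≤ t := by rw [htval]; exact hcase
    have ht0 : 0 ≤ t := le_trans hε0 hεt
    have hpoly : 1 - (87/100) * γ ≤ (1 - γ/2) * (1 - (13/400) * γ) := by nlinarith
    have hstep : σk1 * t + 26/25 * Δ ≤ (t * r) * (σk - 26/25 * Δ) := by
      have c1 : 26/25 * Δ ≤ 13/100 * (γ * ε * σk) := by linarith
      have c2 : 13/100 * (γ * ε * σk) ≤ 13/100 * (γ * t * σk) := by
        have := mul_le_mul_of_nonneg_right
          (mul_le_mul_of_nonneg_left hεt hγ0) hσkpos.le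
        linarith
      have lhs1 : σk1 * t + 26/25 * Δ ≤ t * σk * (1 - 87/100 * γ) := by
        rw [hσk1γ]; linarith [c1, c2]
      have c3 : 13/100 * (γ * ε * σk) ≤ 13/400 * (γ * σk) := by
        have := mul_le_mul_of_nonneg_right
          (mul_le_mul_of_nonneg_left hε hγ0) hσkpos.le
        linarith
      have hA1 : σk * (1 - 13/400 * γ) ≤ σk - 26/25 * Δ := by
        have : σk * (1 - 13/400 * γ) = σk - 13/400 * (γ * σk) := by ring
        linarith
      have hB1 : t * (1 - γ/2) ≤ t * r := mul_le_mul_of_nonneg_left hrge ht0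
      have hq : 0 ≤ σk * (1 - 13/400 * γ) := mul_nonneg hσkpos.le (by linarith)
      have rhs1 : t * σk * ((1 - γ/2) * (1 - 13/400 * γ))
          ≤ (t * r) * (σk - 26/25 * Δ) := by
        calc t * σk * ((1 - γ/2) * (1 - 13/400 * γ))
            = (t * (1 - γ/2)) * (σk * (1 - 13/400 * γ)) := by ring
          _ ≤ (t * r) * (σk * (1 - 13/400 * γ)) := mul_le_mul_of_nonneg_right hB1 hq
          _ ≤ (t * r) * (σk - 26/25 * Δ) :=
              mul_le_mul_of_nonneg_left hA1 (mul_nonneg ht0 hr0.le)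
      have mid : t * σk * (1 - 87/100 * γ)
          ≤ t * σk * ((1 - γ/2) * (1 - 13/400 * γ)) :=
        mul_le_mul_of_nonneg_left hpoly (mul_nonneg ht0 hσkpos.le)
      linarith
    calc σk1 * t + 26/25 * Δ ≤ (t * r) * (σk - 26/25 * Δ) := hstep
      _ = (p * r) * (σk - 26/25 * Δ) := by rw [htval]
      _ ≤ tn * (σk - 26/25 * Δ) := mul_le_mul_of_nonneg_right htn2 hDe

lemma base_num {s0 Au Av E : ℝ} (hs00 : 0 ≤ s0) (hinit : s0 ≤ 1/4)
    (hAv0 : 0 ≤ Av) (hAu0 : 0 ≤ Au)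
    (hpy : Au^2 + Av^2 = E^2) (hle : Av ≤ s0 * E) (hE0 : 0 ≤ E) :
    Av ≤ 26/25 * s0 * Au := by
  have hAv2 : Av^2 ≤ s0^2 * Au^2 + s0^2 * Av^2 := by nlinarith
  have hs016 : s0^2 ≤ 1/16 := by nlinarith
  have haux : s0^2 * Av^2 ≤ 1/16 * Av^2 :=
    mul_le_mul_of_nonneg_right hs016 (sq_nonneg Av)
  refine le_of_sq' hAv0 (mul_nonneg (mul_nonneg (by norm_num) hs00) hAu0) ?_
  nlinarith [mul_nonneg (mul_nonneg hs00 hs00) (sq_nonneg Au)]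

lemma step_ev {t Au Av E : ℝ} (ht0 : 0 ≤ t) (htub : t ≤ 26/100)
    (hAv0 : 0 ≤ Av) (hAu0 : 0 ≤ Au) (hE0 : 0 ≤ E)
    (hpy : Au^2 + Av^2 = E^2) (h1 : Av ≤ t * Au) :
    E ≤ 26/25 * Au := by
  have hAvle : Av ≤ 26/100 * Au := le_trans h1 (mul_le_mul_of_nonneg_right htub hAu0)
  have hAv2 : Av^2 ≤ (26/100)^2 * Au^2 := by nlinarith
  refine le_of_sq' hE0 (mul_nonneg (by norm_num) hAu0) ?_
  nlinarith [sq_nonneg Au]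


noncomputable def bfun (ε γ c : ℝ) (ℓ : ℕ) : ℝ :=
  max ε (c * Real.exp (-(γ * ℓ) / 2))

lemma bfun_def (ε γ c : ℝ) (ℓ : ℕ) :
    bfun ε γ c ℓ = max ε (c * Real.exp (-(γ * ℓ) / 2)) := rfl

lemma bfun_eps (ε γ c : ℝ) (ℓ : ℕ) : ε ≤ bfun ε γ c ℓ := le_max_left _ _

lemma bfun_succ (ε γ c : ℝ) (ℓ : ℕ) :
    (c * Real.exp (-(γ * ℓ) / 2)) * Real.exp (-γ / 2) ≤ bfun ε γ c (ℓ+1) := by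
  have h : (c * Real.exp (-(γ * ℓ) / 2)) * Real.exp (-γ / 2)
      = c * Real.exp (-(γ * (ℓ+1 : ℕ)) / 2) := by
    rw [mul_assoc, ← Real.exp_add]
    congr 2
    push_cast
    ring
  rw [h]
  exact le_max_right _ _

lemma bfun_ub {ε γ c : ℝ} (hε : ε ≤ 1/4) (hγ0 : 0 ≤ γ) (hc0 : 0 ≤ c)
    (hc : c ≤ 26/100) (ℓ : ℕ) : bfun ε γ c ℓ ≤ 26/100 := by
  refine max_le (by linarith) ?_
  have he1 : Real.exp (-(γ * ℓ) / 2) ≤ 1 := by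
    rw [Real.exp_le_one_iff]
    have : 0 ≤ γ * ℓ := mul_nonneg hγ0 (Nat.cast_nonneg ℓ)
    linarith
  have he0 : 0 < Real.exp (-(γ * ℓ) / 2) := Real.exp_pos _
  nlinarith

lemma bfun_nonneg {ε γ c : ℝ} (hε0 : 0 ≤ ε) (ℓ : ℕ) : 0 ≤ bfun ε γ c ℓ :=
  le_trans hε0 (bfun_eps _ _ _ _)

end NSIAux

set_option maxHeartbeats 1000000 in
open NSIAux in
/-- **Local convergence of noisy subspace iteration.**
`A = U Λ_U Uᵀ + V Λ_V Vᵀ` is symmetric with `U, V` orthonormal bases of complementary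
subspaces, `σk` a lower bound on the absolute eigenvalues in `Λ_U` and `σk1` an upper
bound on those in `Λ_V`.  Noisy subspace iteration: for `1 ≤ ℓ ≤ L`, `X ℓ` is an
orthonormal basis for the column span of `Y ℓ = A * X (ℓ-1) + G ℓ`.  With
`Δ = max ‖G ℓ‖`, `γ = 1 − σ_{k+1}/σ_k`, if `‖Vᵀ X 0‖ ≤ 1/4`, `0 ≤ ε ≤ 1/4` and
`σ_k ≥ 8Δ/(γ ε)` then `‖Vᵀ X L‖ ≤ max ε (2 ‖Vᵀ X 0‖ exp(−γL/2))`. -/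
theorem local_convergence_noisy_subspace_iteration
    {n k : ℕ} (hkn : k ≤ n) (L : ℕ)
    (A : Matrix (Fin n) (Fin n) ℝ)
    (U : Matrix (Fin n) (Fin k) ℝ) (V : Matrix (Fin n) (Fin (n - k)) ℝ)
    (dU : Fin k → ℝ) (dV : Fin (n - k) → ℝ) (σk σk1 : ℝ)
    (hU : Uᵀ * U = 1) (hV : Vᵀ * V = 1) (hUV : Uᵀ * V = 0)
    (hfull : U * Uᵀ + V * Vᵀ = 1)
    (hA : A = U * Matrix.diagonal dU * Uᵀ + V * Matrix.diagonal dV * Vᵀ)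
    (hσk : ∀ i, σk ≤ |dU i|) (hσk1 : ∀ j, |dV j| ≤ σk1)
    (hσ1 : 0 ≤ σk1) (hσsep : σk1 ≤ σk) (hσkpos : 0 < σk)
    (X G : ℕ → Matrix (Fin n) (Fin k) ℝ)
    (hX0 : (X 0)ᵀ * X 0 = 1)
    (hiter : ∀ ℓ, 1 ≤ ℓ → ℓ ≤ L →
      (X ℓ)ᵀ * X ℓ = 1 ∧
      (∃ R : Matrix (Fin k) (Fin k) ℝ, A * X (ℓ - 1) + G ℓ = X ℓ * R) ∧
      (∃ C : Matrix (Fin k) (Fin k) ℝ, X ℓ = (A * X (ℓ - 1) + G ℓ) * C))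
    (ε Δ γ : ℝ) (hε0 : 0 ≤ ε) (hε : ε ≤ 1/4)
    (hΔ : ∀ ℓ, 1 ≤ ℓ → ℓ ≤ L → specNorm (G ℓ) ≤ Δ)
    (hγ : γ = 1 - σk1 / σk)
    (hinit : specNorm (Vᵀ * X 0) ≤ 1/4)
    (hgap : 8 * Δ ≤ γ * ε * σk) :
    specNorm (Vᵀ * X L) ≤
      max ε (2 * specNorm (Vᵀ * X 0) * Real.exp (-(γ * L) / 2)) := by
  have hγ0 : 0 ≤ γ := by
    rw [hγ]
    have : σk1 / σk ≤ 1 := (div_le_one hσkpos).mpr hσsep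
    linarith
  have hγ1 : γ ≤ 1 := by
    rw [hγ]
    have : 0 ≤ σk1 / σk := div_nonneg hσ1 hσkpos.le
    linarith
  have hσk1γ : σk1 = (1 - γ) * σk := by
    rw [hγ]; field_simp; ring
  have hs00 : 0 ≤ specNorm (Vᵀ * X 0) := specNorm_nonneg _
  set s0 : ℝ := specNorm (Vᵀ * X 0) with hs0def
  have hc0 : (0:ℝ) ≤ 26/25 * s0 := by linarith
  have hcub : 26/25 * s0 ≤ 26/100 := by linarith
  -- Pythagoras
  have pyth : ∀ w : Fin n → ℝ, en (Uᵀ *ᵥ w) ^ 2 + en (Vᵀ *ᵥ w) ^ 2 = en w ^ 2 := by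
    intro w
    rw [en_sq, en_sq, en_sq, dot_mulVec_self, dot_mulVec_self, transpose_transpose,
      transpose_transpose, ← dotProduct_add, ← add_mulVec, hfull, one_mulVec]
  have hUtle : ∀ w : Fin n → ℝ, en (Uᵀ *ᵥ w) ≤ en w := by
    intro w
    refine le_of_sq (en_nonneg _) (en_nonneg _) ?_
    nlinarith [pyth w, sq_nonneg (en (Vᵀ *ᵥ w))]
  have hVtle : ∀ w : Fin n → ℝ, en (Vᵀ *ᵥ w) ≤ en w := by
    intro w
    refine le_of_sq (en_nonneg _) (en_nonneg _) ?_
    nlinarith [pyth w, sq_nonneg (en (Uᵀ *ᵥ w))]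
  have hVU : Vᵀ * U = 0 := by
    have h := congrArg Matrix.transpose hUV
    simpa using h
  have hUA : Uᵀ * A = Matrix.diagonal dU * Uᵀ := by
    rw [hA, Matrix.mul_add, ← Matrix.mul_assoc, ← Matrix.mul_assoc, hU,
      ← Matrix.mul_assoc, ← Matrix.mul_assoc, hUV]
    simp
  have hVA : Vᵀ * A = Matrix.diagonal dV * Vᵀ := by
    rw [hA, Matrix.mul_add, ← Matrix.mul_assoc, ← Matrix.mul_assoc, hVU,
      ← Matrix.mul_assoc, ← Matrix.mul_assoc, hV]
    simp
  -- main induction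
  have key : ∀ ℓ, ℓ ≤ L → ((X ℓ)ᵀ * X ℓ = 1 ∧
      ∀ v : Fin k → ℝ, en ((Vᵀ * X ℓ) *ᵥ v)
        ≤ bfun ε γ (26/25 * s0) ℓ * en ((Uᵀ * X ℓ) *ᵥ v)) := by
    intro ℓ
    induction ℓ with
    | zero =>
      intro _
      refine ⟨hX0, fun v => ?_⟩
      have hpy : en ((Uᵀ * X 0) *ᵥ v) ^ 2 + en ((Vᵀ * X 0) *ᵥ v) ^ 2 = en v ^ 2 := by
        rw [← mulVec_mulVec, ← mulVec_mulVec, pyth (X 0 *ᵥ v), en_orth hX0]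
      have hle : en ((Vᵀ * X 0) *ᵥ v) ≤ s0 * en v := by
        rw [hs0def]; exact en_mulVec_le _ _
      have hkey : en ((Vᵀ * X 0) *ᵥ v) ≤ 26/25 * s0 * en ((Uᵀ * X 0) *ᵥ v) :=
        base_num hs00 hinit (en_nonneg _) (en_nonneg _) hpy hle (en_nonneg _)
      have hb00 : 26/25 * s0 ≤ bfun ε γ (26/25 * s0) 0 := by
        rw [bfun_def]
        simp only [Nat.cast_zero, mul_zero, neg_zero, zero_div, Real.exp_zero, mul_one]
        exact le_max_right _ _
      exact le_trans hkey (mul_le_mul_of_nonneg_right hb00 (en_nonneg _))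
    | succ ℓ ih =>
      intro hl
      obtain ⟨horthp, hTp⟩ := ih (by omega)
      obtain ⟨horth, -, ⟨C, hC⟩⟩ := hiter (ℓ + 1) (by omega) hl
      simp only [Nat.add_sub_cancel] at hC
      refine ⟨horth, ?_⟩
      set Y := A * X ℓ + G (ℓ + 1) with hY
      have hΔ0 : 0 ≤ Δ := le_trans (specNorm_nonneg (G (ℓ+1))) (hΔ (ℓ+1) (by omega) hl)
      have ht0 : 0 ≤ bfun ε γ (26/25 * s0) ℓ := bfun_nonneg hε0 ℓ
      have htub : bfun ε γ (26/25 * s0) ℓ ≤ 26/100 := bfun_ub hε hγ0 hc0 hcub ℓ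
      set t : ℝ := bfun ε γ (26/25 * s0) ℓ with ht
      set tn : ℝ := bfun ε γ (26/25 * s0) (ℓ+1) with htn
      have htn0 : 0 ≤ tn := bfun_nonneg hε0 (ℓ+1)
      -- numeric recursion
      have hrge : 1 - γ / 2 ≤ Real.exp (-γ / 2) := by
        have := Real.add_one_le_exp (-γ / 2)
        linarith
      have hnum := hnum_core hε0 hε hγ0 hγ1 hσkpos hσk1γ hΔ0 hgap
        (bfun_def ε γ (26/25 * s0) ℓ)
        (mul_nonneg hc0 (Real.exp_pos _).le) htub hrge (Real.exp_pos _)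
        (bfun_eps ε γ (26/25 * s0) (ℓ+1)) (bfun_succ ε γ (26/25 * s0) ℓ)
      obtain ⟨hDe, hnum⟩ := hnum
      -- matrix identities
      have hVY : Vᵀ * Y = Matrix.diagonal dV * (Vᵀ * X ℓ) + Vᵀ * G (ℓ+1) := by
        rw [hY, Matrix.mul_add, ← Matrix.mul_assoc, hVA, Matrix.mul_assoc]
      have hUY : Uᵀ * Y = Matrix.diagonal dU * (Uᵀ * X ℓ) + Uᵀ * G (ℓ+1) := by
        rw [hY, Matrix.mul_add, ← Matrix.mul_assoc, hUA, Matrix.mul_assoc]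
      -- pointwise bound for Y
      have hYbound : ∀ v : Fin k → ℝ,
          en ((Vᵀ * Y) *ᵥ v) ≤ (σk1 * t + 26/25 * Δ) * en ((Uᵀ * X ℓ) *ᵥ v) ∧
          (σk - 26/25 * Δ) * en ((Uᵀ * X ℓ) *ᵥ v) ≤ en ((Uᵀ * Y) *ᵥ v) := by
        intro v
        have hAu0 : 0 ≤ en ((Uᵀ * X ℓ) *ᵥ v) := en_nonneg _
        have hAv0 : 0 ≤ en ((Vᵀ * X ℓ) *ᵥ v) := en_nonneg _
        have h1 : en ((Vᵀ * X ℓ) *ᵥ v) ≤ t * en ((Uᵀ * X ℓ) *ᵥ v) := hTp v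
        have hpy : en ((Uᵀ * X ℓ) *ᵥ v) ^ 2 + en ((Vᵀ * X ℓ) *ᵥ v) ^ 2
            = en v ^ 2 := by
          rw [← mulVec_mulVec, ← mulVec_mulVec, pyth (X ℓ *ᵥ v), en_orth horthp]
        have hev0 : 0 ≤ en v := en_nonneg _
        have h3 : en v ≤ 26/25 * en ((Uᵀ * X ℓ) *ᵥ v) :=
          step_ev ht0 htub hAv0 hAu0 hev0 hpy h1
        have hGv : en (G (ℓ+1) *ᵥ v) ≤ Δ * en v :=
          le_trans (en_mulVec_le _ _)
            (mul_le_mul_of_nonneg_right (hΔ (ℓ+1) (by omega) hl) hev0)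
        have hDE : Δ * en v ≤ Δ * (26/25 * en ((Uᵀ * X ℓ) *ᵥ v)) :=
          mul_le_mul_of_nonneg_left h3 hΔ0
        constructor
        · have hsplit : (Vᵀ * Y) *ᵥ v
              = (Matrix.diagonal dV) *ᵥ ((Vᵀ * X ℓ) *ᵥ v) + Vᵀ *ᵥ (G (ℓ+1) *ᵥ v) := by
            rw [hVY, add_mulVec, mulVec_mulVec, mulVec_mulVec]
          rw [hsplit]
          have e1 : en ((Matrix.diagonal dV) *ᵥ ((Vᵀ * X ℓ) *ᵥ v))
              ≤ σk1 * en ((Vᵀ * X ℓ) *ᵥ v) := en_diag_le hσ1 hσk1 _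
          have e2 : en (Vᵀ *ᵥ (G (ℓ+1) *ᵥ v)) ≤ Δ * en v :=
            le_trans (hVtle _) hGv
          have e4 : σk1 * en ((Vᵀ * X ℓ) *ᵥ v)
              ≤ σk1 * (t * en ((Uᵀ * X ℓ) *ᵥ v)) := mul_le_mul_of_nonneg_left h1 hσ1
          calc en _ ≤ en ((Matrix.diagonal dV) *ᵥ ((Vᵀ * X ℓ) *ᵥ v))
                + en (Vᵀ *ᵥ (G (ℓ+1) *ᵥ v)) := en_add_le _ _
            _ ≤ (σk1 * t + 26/25 * Δ) * en ((Uᵀ * X ℓ) *ᵥ v) := by linarith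
        · have hsplit : (Uᵀ * Y) *ᵥ v
              = (Matrix.diagonal dU) *ᵥ ((Uᵀ * X ℓ) *ᵥ v) + Uᵀ *ᵥ (G (ℓ+1) *ᵥ v) := by
            rw [hUY, add_mulVec, mulVec_mulVec, mulVec_mulVec]
          rw [hsplit]
          have e1 : σk * en ((Uᵀ * X ℓ) *ᵥ v)
              ≤ en ((Matrix.diagonal dU) *ᵥ ((Uᵀ * X ℓ) *ᵥ v)) :=
            en_diag_ge hσkpos.le hσk _
          have e2 : en (Uᵀ *ᵥ (G (ℓ+1) *ᵥ v)) ≤ Δ * en v :=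
            le_trans (hUtle _) hGv
          have e3 := en_add_ge ((Matrix.diagonal dU) *ᵥ ((Uᵀ * X ℓ) *ᵥ v))
            (Uᵀ *ᵥ (G (ℓ+1) *ᵥ v))
          linarith
      -- conclude
      intro v
      have hXV : (Vᵀ * X (ℓ+1)) *ᵥ v = (Vᵀ * Y) *ᵥ (C *ᵥ v) := by
        rw [hC, mulVec_mulVec, Matrix.mul_assoc]
      have hXU : (Uᵀ * X (ℓ+1)) *ᵥ v = (Uᵀ * Y) *ᵥ (C *ᵥ v) := by
        rw [hC, mulVec_mulVec, Matrix.mul_assoc]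
      rw [hXV, hXU]
      obtain ⟨hv1, hv2⟩ := hYbound (C *ᵥ v)
      have hAu0 : 0 ≤ en ((Uᵀ * X ℓ) *ᵥ (C *ᵥ v)) := en_nonneg _
      calc en ((Vᵀ * Y) *ᵥ (C *ᵥ v))
          ≤ (σk1 * t + 26/25 * Δ) * en ((Uᵀ * X ℓ) *ᵥ (C *ᵥ v)) := hv1
        _ ≤ (tn * (σk - 26/25 * Δ)) * en ((Uᵀ * X ℓ) *ᵥ (C *ᵥ v)) :=
            mul_le_mul_of_nonneg_right hnum hAu0
        _ = tn * ((σk - 26/25 * Δ) * en ((Uᵀ * X ℓ) *ᵥ (C *ᵥ v))) := by ring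
        _ ≤ tn * en ((Uᵀ * Y) *ᵥ (C *ᵥ v)) := mul_le_mul_of_nonneg_left hv2 htn0
  -- finish
  obtain ⟨horthL, hTL⟩ := key L le_rfl
  have hfinal : specNorm (Vᵀ * X L) ≤ bfun ε γ (26/25 * s0) L := by
    refine specNorm_le_of _ (bfun_nonneg hε0 L) (fun v => ?_)
    have h1 : en ((Uᵀ * X L) *ᵥ v) ≤ en v := by
      rw [← mulVec_mulVec]
      exact le_trans (hUtle _) (le_of_eq (en_orth horthL v))
    exact le_trans (hTL v) (mul_le_mul_of_nonneg_left h1 (bfun_nonneg hε0 L))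
  refine le_trans hfinal ?_
  rw [bfun_def]
  refine max_le_max le_rfl ?_
  have he := (Real.exp_pos (-(γ * (L:ℕ)) / 2)).le
  nlinarith
end

section
/- (Convergence of noisy subspace iteration under admissible noise.) Let A be a symmetric n×n real matrix with spectral decomposition A = UΛ_U Uᵀ + VΛ_V Vᵀ (U ∈ ℝ^{n×k}, V ∈ ℝ^{n×(n−k)} orthonormal, σ₁ ≥ … ≥ σ_n the absolute eigenvalues in non-increasing order), and let γ_k = 1 − σ_{k+1}/σ_k. Consider the noisy subspace iteration: starting from an orthonormal X₀ ∈ ℝ^{n×k}, for ℓ = 1,…,L set Y_ℓ = A X_{ℓ−1} + G_ℓ and let X_ℓ be an orthonormal basis for the column span of Y_ℓ. Let ε ≤ 1/2. Assume that each pair (X_{ℓ−1}, G_ℓ) is (ε/2)-admissible, i.e. ‖G_ℓ‖ ≤ (1/32) γ_k σ_k ‖Vᵀ X_{ℓ−1}‖ + (ε/64) γ_k σ_k, and that ‖Vᵀ X₀‖ ≤ 1/4. Then ‖Vᵀ X_L‖ ≤ ε for any L ≥ 4 γ_k^{-1} log(1/ε). -/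
open Matrix

section infra
variable {m p q : ℕ}

lemma specNorm_nonneg' (A : Matrix (Fin m) (Fin p) ℝ) : 0 ≤ specNorm A :=
  norm_nonneg _

lemma apply_le_specNorm (A : Matrix (Fin m) (Fin p) ℝ) (x : EuclideanSpace ℝ (Fin p)) :
    ‖toEuclideanLin A x‖ ≤ specNorm A * ‖x‖ := by
  have := (LinearMap.toContinuousLinearMap (Matrix.toEuclideanLin A)).le_opNorm x
  simpa [specNorm] using this

lemma specNorm_le_bound (A : Matrix (Fin m) (Fin p) ℝ) (c : ℝ) (hc : 0 ≤ c)
    (h : ∀ x : EuclideanSpace ℝ (Fin p), ‖toEuclideanLin A x‖ ≤ c * ‖x‖) :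
    specNorm A ≤ c :=
  ContinuousLinearMap.opNorm_le_bound _ hc (by simpa using h)

lemma dot_aux (A : Matrix (Fin m) (Fin p) ℝ) (x : Fin p → ℝ) (y : Fin m → ℝ) :
    x ⬝ᵥ (Aᵀ *ᵥ y) = (A *ᵥ x) ⬝ᵥ y := by
  rw [mulVec_transpose, dotProduct_comm, ← dotProduct_mulVec, dotProduct_comm]

lemma toEuclideanLin_mul_apply (A : Matrix (Fin m) (Fin p) ℝ) (B : Matrix (Fin p) (Fin q) ℝ)
    (x : EuclideanSpace ℝ (Fin q)) :
    toEuclideanLin (A * B) x = toEuclideanLin A (toEuclideanLin B x) := by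
  simp [toEuclideanLin_apply, mulVec_mulVec]

lemma sq_norm_toEuclideanLin (A : Matrix (Fin m) (Fin p) ℝ) (x : EuclideanSpace ℝ (Fin p)) :
    ‖toEuclideanLin A x‖ ^ 2 = inner ℝ (x : EuclideanSpace ℝ (Fin p)) (toEuclideanLin (Aᵀ * A) x) := by
  rw [toEuclideanLin_mul_apply, ← real_inner_self_eq_norm_sq]
  simp only [toEuclideanLin_apply, PiLp.inner_apply, RCLike.inner_apply, conj_trivial,
    ]
  have := (dot_aux A x.ofLp (A *ᵥ x.ofLp)).symm
  rw [dotProduct_comm x.ofLp] at this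
  exact this

lemma le_of_sq_le_sq'' {a b : ℝ} (hb : 0 ≤ b) (h : a^2 ≤ b^2) (ha : 0 ≤ a) : a ≤ b := by
  nlinarith

lemma isom_of_orth (A : Matrix (Fin m) (Fin p) ℝ) (h : Aᵀ * A = 1)
    (x : EuclideanSpace ℝ (Fin p)) : ‖toEuclideanLin A x‖ = ‖x‖ := by
  have h2 : ‖toEuclideanLin A x‖ ^ 2 = ‖x‖ ^ 2 := by
    rw [sq_norm_toEuclideanLin, h, ← real_inner_self_eq_norm_sq]
    congr 1
    simp [toEuclideanLin_apply, one_mulVec]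
  calc ‖toEuclideanLin A x‖ = Real.sqrt (‖toEuclideanLin A x‖^2) :=
        (Real.sqrt_sq (norm_nonneg _)).symm
    _ = Real.sqrt (‖x‖^2) := by rw [h2]
    _ = ‖x‖ := Real.sqrt_sq (norm_nonneg _)

lemma pythagoras (M : Matrix (Fin m) (Fin p) ℝ) (N : Matrix (Fin m) (Fin q) ℝ)
    (h : M * Mᵀ + N * Nᵀ = 1) (z : EuclideanSpace ℝ (Fin m)) :
    ‖toEuclideanLin Mᵀ z‖ ^ 2 + ‖toEuclideanLin Nᵀ z‖ ^ 2 = ‖z‖ ^ 2 := by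
  rw [sq_norm_toEuclideanLin, sq_norm_toEuclideanLin, transpose_transpose, transpose_transpose]
  rw [← inner_add_right, ← real_inner_self_eq_norm_sq]
  congr 1
  rw [← LinearMap.add_apply, ← map_add, h]
  simp [toEuclideanLin_apply, one_mulVec]

lemma trans_contract (M : Matrix (Fin m) (Fin p) ℝ) (N : Matrix (Fin m) (Fin q) ℝ)
    (h : M * Mᵀ + N * Nᵀ = 1) (z : EuclideanSpace ℝ (Fin m)) :
    ‖toEuclideanLin Nᵀ z‖ ≤ ‖z‖ := by
  have := pythagoras M N h z
  refine le_of_sq_le_sq'' (norm_nonneg _) ?_ (norm_nonneg _)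
  nlinarith [sq_nonneg ‖toEuclideanLin Mᵀ z‖]

lemma diag_upper (d : Fin m → ℝ) (c : ℝ) (hc : 0 ≤ c) (h : ∀ i, |d i| ≤ c)
    (x : EuclideanSpace ℝ (Fin m)) :
    ‖toEuclideanLin (diagonal d) x‖ ≤ c * ‖x‖ := by
  refine le_of_sq_le_sq'' (by positivity) ?_ (norm_nonneg _)
  rw [mul_pow, sq_norm_toEuclideanLin, diagonal_transpose, diagonal_mul_diagonal,
    ← real_inner_self_eq_norm_sq]
  simp only [toEuclideanLin_apply, PiLp.inner_apply, RCLike.inner_apply, conj_trivial,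
    mulVec_diagonal]
  rw [Finset.mul_sum]
  refine Finset.sum_le_sum fun i _ => ?_
  have h1 := h i
  have h2 : (d i)^2 ≤ c^2 := by nlinarith [abs_nonneg (d i), sq_abs (d i)]
  nlinarith [sq_nonneg (x i)]

lemma diag_lower (d : Fin m → ℝ) (c : ℝ) (hc : 0 ≤ c) (h : ∀ i, c ≤ |d i|)
    (x : EuclideanSpace ℝ (Fin m)) :
    c * ‖x‖ ≤ ‖toEuclideanLin (diagonal d) x‖ := by
  refine le_of_sq_le_sq'' (norm_nonneg _) ?_ (by positivity)
  rw [mul_pow, sq_norm_toEuclideanLin, diagonal_transpose, diagonal_mul_diagonal,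
    ← real_inner_self_eq_norm_sq]
  simp only [toEuclideanLin_apply, PiLp.inner_apply, RCLike.inner_apply, conj_trivial,
    mulVec_diagonal]
  rw [Finset.mul_sum]
  refine Finset.sum_le_sum fun i _ => ?_
  have h1 := h i
  have h2 : c^2 ≤ (d i)^2 := by nlinarith [abs_nonneg (d i), sq_abs (d i)]
  nlinarith [sq_nonneg (x i)]

lemma inv_mono {ρ τ₁ τ₂ : ℝ} (hτ1 : 0 ≤ τ₁) (h12 : τ₁ ≤ τ₂)
    (h : ρ^2*(1+τ₁^2) ≤ τ₁^2) : ρ^2*(1+τ₂^2) ≤ τ₂^2 := by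
  have hρ1 : ρ^2 ≤ 1 := by nlinarith [sq_nonneg ρ, sq_nonneg τ₁, mul_nonneg (sq_nonneg ρ) (sq_nonneg τ₁)]
  nlinarith [mul_self_le_mul_self hτ1 h12, sq_nonneg ρ]

end infra

lemma w_lower {ρ s vn w q : ℝ} (hw : 0 ≤ w) (hq : 0 ≤ q) (hvn : 0 ≤ vn) (hρ0 : 0 ≤ ρ)
    (hp : w^2 + q^2 = vn^2) (he : q ≤ ρ*vn) (hs2 : s^2 = 1-ρ^2) (hs0 : 0 ≤ s) :
    s*vn ≤ w := by
  refine le_of_sq_le_sq'' hw ?_ (mul_nonneg hs0 hvn)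
  nlinarith [mul_nonneg hρ0 hvn]

set_option maxHeartbeats 1000000 in
lemma crux {σk γ ε ρ g s τ : ℝ}
    (hσ : 0 < σk) (hγ0 : 0 < γ) (hγ1 : γ ≤ 1) (hε0 : 0 < ε) (hε : ε ≤ 1/2)
    (hρ0 : 0 ≤ ρ) (hg0 : 0 ≤ g) (hg : g ≤ 1/32*γ*σk*ρ + ε/64*γ*σk)
    (hτ0 : 0 ≤ τ) (hτ : τ ≤ 1/2) (hs0 : 0 ≤ s) (hs : s^2 = 1 - ρ^2)
    (hρτ : ρ^2*(1+τ^2) ≤ τ^2) :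
    0 < σk*s - g ∧ (1-γ)*σk*ρ + g ≤ max ε ((1-γ/4)*τ) * (σk*s - g) := by
  have hρτs : ρ ≤ τ * s := by
    refine le_of_sq_le_sq'' (by positivity) ?_ hρ0
    nlinarith
  have hs1 : s ≤ 1 := by nlinarith
  have hs45 : 4/5 ≤ s^2 := by nlinarith
  have hs89 : 89/100 ≤ s := by nlinarith
  have hρ2 : ρ ≤ 1/2 := by nlinarith
  have hεγ : ε*γ ≤ 1/2 := by nlinarith
  have hg' : g ≤ σk*(ρ/32) + σk/128 := by
    nlinarith [mul_nonneg (mul_nonneg (sub_nonneg.2 hγ1) hσ.le) hρ0,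
      mul_le_mul_of_nonneg_right hεγ hσ.le]
  have hD : 0 < σk*s - g := by nlinarith [mul_le_mul_of_nonneg_left hs89 hσ.le]
  refine ⟨hD, ?_⟩
  rcases le_total ε ((1-γ/4)*τ) with hcase | hcase
  · rw [max_eq_right hcase]
    have hτγ0 : (0:ℝ) ≤ (1-γ/4)*τ := mul_nonneg (by linarith) hτ0
    have hε' : ε ≤ τ := by nlinarith [mul_nonneg hγ0.le hτ0]
    have hB : g ≤ γ*σk*τ*(s/32 + 1/64) := by
      nlinarith [mul_le_mul_of_nonneg_left hρτs (by positivity : (0:ℝ) ≤ 1/32*γ*σk),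
        mul_le_mul_of_nonneg_left hε' (by positivity : (0:ℝ) ≤ 1/64*γ*σk)]
    have h1 : (1-γ)*σk*ρ ≤ (1-γ)*σk*(τ*s) :=
      mul_le_mul_of_nonneg_left hρτs (by nlinarith)
    have h2 : (1-γ/4)*τ*(σk*s - γ*σk*τ*(s/32+1/64)) ≤ (1-γ/4)*τ*(σk*s - g) :=
      mul_le_mul_of_nonneg_left (by linarith) hτγ0
    have key : (s/32 + 1/64)*(1 + (1-γ/4)*τ) ≤ 3/4*s := by nlinarith
    have key2 : γ*σk*τ*((s/32 + 1/64)*(1 + (1-γ/4)*τ)) ≤ γ*σk*τ*(3/4*s) :=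
      mul_le_mul_of_nonneg_left key (by positivity)
    nlinarith [h1, h2, key2, hB]
  · rw [max_eq_left hcase]
    have hkey : (1-γ/4)*ρ ≤ ε*s := by
      nlinarith [mul_le_mul_of_nonneg_right hcase hs0,
        mul_le_mul_of_nonneg_left hρτs (by nlinarith : (0:ℝ) ≤ 1-γ/4)]
    have hρ43 : ρ ≤ 4/3*(ε*s) := by nlinarith
    have h5 : (1-31/32*γ)*((1-γ/4)*ρ) ≤ (1-31/32*γ)*(ε*s) :=
      mul_le_mul_of_nonneg_left hkey (by nlinarith)
    have hF : ρ*(1-31/32*γ) + 5/128*(ε*γ) ≤ ε*s := by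
      nlinarith [h5, mul_le_mul_of_nonneg_left hρ43 (by positivity : (0:ℝ) ≤ γ/4),
        mul_nonneg (mul_nonneg hγ0.le hε0.le) (sub_nonneg.2 hs89),
        mul_nonneg hγ0.le hρ0]
    have hgA2 : g ≤ γ*σk*(3/128) := by
      nlinarith [mul_le_mul_of_nonneg_left hρ2 (by positivity : (0:ℝ) ≤ 1/32*γ*σk),
        mul_le_mul_of_nonneg_left hε (by positivity : (0:ℝ) ≤ 1/64*γ*σk)]
    have hrhs : ε*(σk*s - γ*σk*(3/128)) ≤ ε*(σk*s - g) :=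
      mul_le_mul_of_nonneg_left (by linarith) hε0.le
    nlinarith [hrhs, mul_le_mul_of_nonneg_left hF hσ.le, hg]


set_option maxHeartbeats 4000000 in
lemma step_lemma {n k : ℕ}
    (A : Matrix (Fin n) (Fin n) ℝ)
    (U : Matrix (Fin n) (Fin k) ℝ) (V : Matrix (Fin n) (Fin (n - k)) ℝ)
    (dU : Fin k → ℝ) (dV : Fin (n - k) → ℝ) (σk σk1 γ ε τ : ℝ)
    (hU : Uᵀ * U = 1) (hV : Vᵀ * V = 1) (hUV : Uᵀ * V = 0)
    (hfull : U * Uᵀ + V * Vᵀ = 1)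
    (hA : A = U * Matrix.diagonal dU * Uᵀ + V * Matrix.diagonal dV * Vᵀ)
    (hσk : ∀ i, σk ≤ |dU i|) (hσk1 : ∀ j, |dV j| ≤ σk1)
    (hσ1 : 0 ≤ σk1) (hσkpos : 0 < σk) (hσk1γ : σk1 = (1-γ)*σk)
    (hγ0 : 0 < γ) (hγ1 : γ ≤ 1) (hε0 : 0 < ε) (hε : ε ≤ 1/2)
    (Xp Xc Gc : Matrix (Fin n) (Fin k) ℝ)
    (hXp : Xpᵀ * Xp = 1) (hXc : Xcᵀ * Xc = 1)
    (C : Matrix (Fin k) (Fin k) ℝ) (hC : Xc = (A * Xp + Gc) * C)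
    (hg : specNorm Gc ≤ 1/32*γ*σk*specNorm (Vᵀ*Xp) + ε/64*γ*σk)
    (hτ0 : 0 ≤ τ) (hτ : τ ≤ 1/2)
    (hinv : specNorm (Vᵀ*Xp)^2 * (1 + τ^2) ≤ τ^2) :
    specNorm (Vᵀ*Xc)^2 * (1 + (max ε ((1-γ/4)*τ))^2) ≤ (max ε ((1-γ/4)*τ))^2 := by
  have hρ0 : 0 ≤ specNorm (Vᵀ*Xp) := specNorm_nonneg' _
  have hg0 : 0 ≤ specNorm Gc := specNorm_nonneg' _
  -- matrix identities
  have hVU : Vᵀ * U = 0 := by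
    have := congrArg Matrix.transpose hUV
    simpa [Matrix.transpose_mul] using this
  have hVA : Vᵀ * A = Matrix.diagonal dV * Vᵀ := by
    simp only [hA, Matrix.mul_add, ← Matrix.mul_assoc, hVU, hV, Matrix.zero_mul,
      Matrix.one_mul, zero_add]
  have hUA : Uᵀ * A = Matrix.diagonal dU * Uᵀ := by
    simp only [hA, Matrix.mul_add, ← Matrix.mul_assoc, hUV, hU, Matrix.zero_mul,
      Matrix.one_mul, add_zero]
  have hVXc : Vᵀ * Xc = (Matrix.diagonal dV * (Vᵀ * Xp) + Vᵀ * Gc) * C := by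
    rw [hC, ← Matrix.mul_assoc, Matrix.mul_add, ← Matrix.mul_assoc, hVA, Matrix.mul_assoc]
  have hUXc : Uᵀ * Xc = (Matrix.diagonal dU * (Uᵀ * Xp) + Uᵀ * Gc) * C := by
    rw [hC, ← Matrix.mul_assoc, Matrix.mul_add, ← Matrix.mul_assoc, hUA, Matrix.mul_assoc]
  set ρ := specNorm (Vᵀ*Xp) with hρdef
  set g := specNorm Gc with hgdef
  set τ' := max ε ((1-γ/4)*τ) with hτ'def
  have hρsq : ρ^2 ≤ 1/4 := by
    nlinarith [sq_nonneg τ, sq_nonneg ρ, mul_nonneg (sq_nonneg ρ) (sq_nonneg τ)]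
  set s := Real.sqrt (1-ρ^2) with hsdef
  have hs0 : 0 ≤ s := Real.sqrt_nonneg _
  have hs : s^2 = 1 - ρ^2 := Real.sq_sqrt (by nlinarith)
  obtain ⟨hD, hN⟩ := crux hσkpos hγ0 hγ1 hε0 hε hρ0 hg0 hg hτ0 hτ hs0 hs hinv
  rw [← hτ'def] at hN
  have hτ'pos : 0 < τ' := lt_of_lt_of_le hε0 (le_max_left _ _)
  have h1τ' : (0:ℝ) < 1 + τ'^2 := by positivity
  clear_value s τ'
  -- the pointwise bound
  have key : ∀ u : EuclideanSpace ℝ (Fin k),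
      ‖toEuclideanLin (Vᵀ*Xc) u‖ ≤ Real.sqrt (τ'^2/(1+τ'^2)) * ‖u‖ := by
    intro u
    set z := toEuclideanLin Xc u with hzdef
    set v := toEuclideanLin C u with hvdef
    have hz : ‖z‖ = ‖u‖ := isom_of_orth Xc hXc u
    have hpyth := pythagoras U V hfull z
    have hVz : toEuclideanLin (Vᵀ*Xc) u = toEuclideanLin Vᵀ z := by
      rw [hzdef, ← toEuclideanLin_mul_apply]
    have hUz : toEuclideanLin (Uᵀ*Xc) u = toEuclideanLin Uᵀ z := by
      rw [hzdef, ← toEuclideanLin_mul_apply]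
    set a := ‖toEuclideanLin Vᵀ z‖ with hadef
    set b := ‖toEuclideanLin Uᵀ z‖ with hbdef
    have ha0 : 0 ≤ a := norm_nonneg _
    have hb0 : 0 ≤ b := norm_nonneg _
    have hab : b^2 + a^2 = ‖u‖^2 := by rw [← hz]; exact hpyth
    have hgv : ‖toEuclideanLin Gc v‖ ≤ g * ‖v‖ := apply_le_specNorm _ _
    -- bound a
    have hVexp : toEuclideanLin Vᵀ z =
        toEuclideanLin (Matrix.diagonal dV) (toEuclideanLin (Vᵀ * Xp) v) +
          toEuclideanLin Vᵀ (toEuclideanLin Gc v) := by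
      rw [← hVz, hVXc, toEuclideanLin_mul_apply _ C, ← hvdef, map_add, LinearMap.add_apply,
        toEuclideanLin_mul_apply Vᵀ Gc, toEuclideanLin_mul_apply (Matrix.diagonal dV) (Vᵀ * Xp)]
    have ha : a ≤ (σk1*ρ + g) * ‖v‖ := by
      rw [hadef, hVexp]
      have t1 := norm_add_le (toEuclideanLin (Matrix.diagonal dV) (toEuclideanLin (Vᵀ * Xp) v))
        (toEuclideanLin Vᵀ (toEuclideanLin Gc v))
      have t2 : ‖toEuclideanLin (Matrix.diagonal dV) (toEuclideanLin (Vᵀ * Xp) v)‖ ≤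
          σk1 * (ρ * ‖v‖) := by
        refine le_trans (diag_upper dV σk1 hσ1 hσk1 _) ?_
        exact mul_le_mul_of_nonneg_left (apply_le_specNorm _ _) hσ1
      have t3 : ‖toEuclideanLin Vᵀ (toEuclideanLin Gc v)‖ ≤ g * ‖v‖ :=
        le_trans (trans_contract U V hfull _) hgv
      have heq : (σk1*ρ + g) * ‖v‖ = σk1*(ρ*‖v‖) + g*‖v‖ := by ring
      linarith [t1, t2, t3]
    -- bound b from below
    have hUexp : toEuclideanLin Uᵀ z =
        toEuclideanLin (Matrix.diagonal dU) (toEuclideanLin (Uᵀ * Xp) v) +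
          toEuclideanLin Uᵀ (toEuclideanLin Gc v) := by
      rw [← hUz, hUXc, toEuclideanLin_mul_apply _ C, ← hvdef, map_add, LinearMap.add_apply,
        toEuclideanLin_mul_apply Uᵀ Gc, toEuclideanLin_mul_apply (Matrix.diagonal dU) (Uᵀ * Xp)]
    have hw1 : s * ‖v‖ ≤ ‖toEuclideanLin (Uᵀ * Xp) v‖ := by
      have hp2 := pythagoras U V hfull (toEuclideanLin Xp v)
      have hxpv : ‖toEuclideanLin Xp v‖ = ‖v‖ := isom_of_orth Xp hXp v
      rw [← toEuclideanLin_mul_apply Uᵀ Xp, ← toEuclideanLin_mul_apply Vᵀ Xp, hxpv] at hp2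
      have e3 : ‖toEuclideanLin (Vᵀ * Xp) v‖ ≤ ρ * ‖v‖ := apply_le_specNorm _ _
      exact w_lower (norm_nonneg _) (norm_nonneg _) (norm_nonneg _) hρ0 hp2 e3 hs hs0
    have hb : (σk*s - g) * ‖v‖ ≤ b := by
      rw [hbdef, hUexp]
      have t4 := norm_add_le
        (toEuclideanLin (Matrix.diagonal dU) (toEuclideanLin (Uᵀ * Xp) v) +
          toEuclideanLin Uᵀ (toEuclideanLin Gc v)) (-(toEuclideanLin Uᵀ (toEuclideanLin Gc v)))
      simp only [add_neg_cancel_right, norm_neg] at t4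
      have t5 : σk * (s * ‖v‖) ≤
          ‖toEuclideanLin (Matrix.diagonal dU) (toEuclideanLin (Uᵀ * Xp) v)‖ := by
        refine le_trans ?_ (diag_lower dU σk hσkpos.le hσk _)
        exact mul_le_mul_of_nonneg_left hw1 hσkpos.le
      have t6 : ‖toEuclideanLin Uᵀ (toEuclideanLin Gc v)‖ ≤ g * ‖v‖ :=
        le_trans (trans_contract V U (by rw [add_comm]; exact hfull) _) hgv
      have heq : (σk*s - g) * ‖v‖ = σk*(s*‖v‖) - g*‖v‖ := by ring
      linarith [t4, t5, t6]
    -- combine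
    clear_value a b
    clear hVexp hUexp hpyth hUz
    have hN0 : 0 ≤ σk1*ρ + g := add_nonneg (mul_nonneg hσ1 hρ0) hg0
    have e1 : a*(σk*s-g) ≤ ((σk1*ρ+g)*‖v‖)*(σk*s-g) := mul_le_mul_of_nonneg_right ha hD.le
    have e2 : (σk1*ρ+g)*((σk*s-g)*‖v‖) ≤ (σk1*ρ+g)*b := mul_le_mul_of_nonneg_left hb hN0
    have e3 : ((1-γ)*σk*ρ+g)*b ≤ (τ'*(σk*s-g))*b := mul_le_mul_of_nonneg_right hN hb0
    have e4 : a*(σk*s-g) ≤ (τ'*b)*(σk*s-g) := by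
      rw [hσk1γ] at e1 e2
      have heq1 : (((1-γ)*σk*ρ+g)*‖v‖)*(σk*s-g) = ((1-γ)*σk*ρ+g)*((σk*s-g)*‖v‖) := by ring
      have heq2 : (τ'*(σk*s-g))*b = (τ'*b)*(σk*s-g) := by ring
      linarith [e1, e2, e3]
    have e5 : a ≤ τ'*b := le_of_mul_le_mul_right e4 hD
    have e6 : a^2*(1+τ'^2) ≤ τ'^2*‖u‖^2 := by
      have f1 := mul_self_le_mul_self ha0 e5
      have heq1 : (τ'*b)*(τ'*b) = τ'^2*b^2 := by ring
      have heq2 : a*a = a^2 := by ring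
      have hab2 : τ'^2*(b^2+a^2) = τ'^2*‖u‖^2 := by rw [hab]
      have heq3 : τ'^2*(b^2+a^2) = τ'^2*b^2 + τ'^2*a^2 := by ring
      have heq4 : a^2*(1+τ'^2) = a^2 + τ'^2*a^2 := by ring
      linarith [f1]
    rw [hVz, ← hadef]
    refine le_of_sq_le_sq'' (by positivity) ?_ ha0
    rw [mul_pow, Real.sq_sqrt (by positivity : (0:ℝ) ≤ τ'^2/(1+τ'^2))]
    rw [div_mul_eq_mul_div, le_div_iff₀ h1τ']
    linarith [e6]
  have hfin : specNorm (Vᵀ*Xc) ≤ Real.sqrt (τ'^2/(1+τ'^2)) :=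
    specNorm_le_bound _ _ (Real.sqrt_nonneg _) key
  have hfin2 : specNorm (Vᵀ*Xc)^2 ≤ τ'^2/(1+τ'^2) := by
    have h1 := mul_self_le_mul_self (specNorm_nonneg' (Vᵀ*Xc)) hfin
    have h2 : Real.sqrt (τ'^2/(1+τ'^2)) * Real.sqrt (τ'^2/(1+τ'^2)) = τ'^2/(1+τ'^2) :=
      Real.mul_self_sqrt (by positivity)
    have heq : specNorm (Vᵀ*Xc)^2 = specNorm (Vᵀ*Xc)*specNorm (Vᵀ*Xc) := by ring
    linarith [h1, h2]
  calc specNorm (Vᵀ*Xc)^2 * (1 + τ'^2) ≤ (τ'^2/(1+τ'^2)) * (1+τ'^2) :=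
        mul_le_mul_of_nonneg_right hfin2 h1τ'.le
    _ = τ'^2 := div_mul_cancel₀ _ h1τ'.ne'


set_option maxHeartbeats 1000000 in
/-- **Convergence of noisy subspace iteration under admissible noise.**
`A = U Λ_U Uᵀ + V Λ_V Vᵀ` is symmetric with `U, V` orthonormal bases of complementary
subspaces, `σk` a lower bound on the absolute eigenvalues in `Λ_U` and `σk1` an upper
bound on those in `Λ_V`, and `γ = 1 − σ_{k+1}/σ_k`.  Noisy subspace iteration: for
`1 ≤ ℓ ≤ L`, `X ℓ` is an orthonormal basis for the column span of `A * X (ℓ-1) + G ℓ`.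
If every `(X (ℓ-1), G ℓ)` is `(ε/2)`-admissible, i.e.
`‖G ℓ‖ ≤ (1/32) γ σ_k ‖Vᵀ X (ℓ-1)‖ + (ε/64) γ σ_k`, `‖Vᵀ X 0‖ ≤ 1/4` and `ε ≤ 1/2`,
then `‖Vᵀ X L‖ ≤ ε` for any `L ≥ 4 γ⁻¹ log(1/ε)`. -/
theorem convergence_admissible_noise
    {n k : ℕ} (hkn : k ≤ n) (L : ℕ)
    (A : Matrix (Fin n) (Fin n) ℝ)
    (U : Matrix (Fin n) (Fin k) ℝ) (V : Matrix (Fin n) (Fin (n - k)) ℝ)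
    (dU : Fin k → ℝ) (dV : Fin (n - k) → ℝ) (σk σk1 : ℝ)
    (hU : Uᵀ * U = 1) (hV : Vᵀ * V = 1) (hUV : Uᵀ * V = 0)
    (hfull : U * Uᵀ + V * Vᵀ = 1)
    (hA : A = U * Matrix.diagonal dU * Uᵀ + V * Matrix.diagonal dV * Vᵀ)
    (hσk : ∀ i, σk ≤ |dU i|) (hσk1 : ∀ j, |dV j| ≤ σk1)
    (hσ1 : 0 ≤ σk1) (hσsep : σk1 ≤ σk) (hσkpos : 0 < σk)
    (X G : ℕ → Matrix (Fin n) (Fin k) ℝ)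
    (hX0 : (X 0)ᵀ * X 0 = 1)
    (hiter : ∀ ℓ, 1 ≤ ℓ → ℓ ≤ L →
      (X ℓ)ᵀ * X ℓ = 1 ∧
      (∃ R : Matrix (Fin k) (Fin k) ℝ, A * X (ℓ - 1) + G ℓ = X ℓ * R) ∧
      (∃ C : Matrix (Fin k) (Fin k) ℝ, X ℓ = (A * X (ℓ - 1) + G ℓ) * C))
    (ε γ : ℝ) (hε0 : 0 < ε) (hε : ε ≤ 1/2)
    (hγ : γ = 1 - σk1 / σk)
    (hadm : ∀ ℓ, 1 ≤ ℓ → ℓ ≤ L →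
      specNorm (G ℓ) ≤
        (1/32) * γ * σk * specNorm (Vᵀ * X (ℓ - 1)) + (ε/64) * γ * σk)
    (hinit : specNorm (Vᵀ * X 0) ≤ 1/4)
    (hL : 4 * Real.log (1/ε) ≤ γ * L) :
    specNorm (Vᵀ * X L) ≤ ε := by
  have hιε : (1:ℝ) < 1/ε := by rw [lt_div_iff₀ hε0]; linarith
  have hlog : 0 < Real.log (1/ε) := Real.log_pos hιε
  have hγpos : 0 < γ := by
    by_contra h
    push_neg at h
    have : γ * L ≤ 0 := mul_nonpos_of_nonpos_of_nonneg h (Nat.cast_nonneg L)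
    linarith
  have hγ1 : γ ≤ 1 := by
    have : 0 ≤ σk1 / σk := div_nonneg hσ1 hσkpos.le
    rw [hγ]; linarith
  have hσk1γ : σk1 = (1-γ)*σk := by
    rw [hγ]; field_simp; ring
  have hc0 : (0:ℝ) ≤ 1 - γ/4 := by linarith
  have hc1 : (1 - γ/4 : ℝ) ≤ 1 := by linarith
  have hτ0 : ∀ ℓ : ℕ, 0 ≤ max ε ((1-γ/4)^ℓ * (13/50)) :=
    fun ℓ => le_trans hε0.le (le_max_left _ _)
  have hτhalf : ∀ ℓ : ℕ, max ε ((1-γ/4)^ℓ * (13/50)) ≤ 1/2 := by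
    intro ℓ
    apply max_le hε
    have h1 : (1-γ/4:ℝ)^ℓ ≤ 1 := pow_le_one₀ hc0 hc1
    nlinarith [pow_nonneg hc0 ℓ]
  have hτstep : ∀ ℓ : ℕ,
      max ε ((1-γ/4) * max ε ((1-γ/4)^ℓ * (13/50))) ≤ max ε ((1-γ/4)^(ℓ+1) * (13/50)) := by
    intro ℓ
    apply max_le (le_max_left _ _)
    rw [mul_max_of_nonneg _ _ hc0]
    apply max_le
    · exact le_trans (by nlinarith) (le_max_left _ _)
    · have heq : (1-γ/4) * ((1-γ/4)^ℓ * (13/50)) = (1-γ/4)^(ℓ+1) * (13/50) := by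
        rw [pow_succ]; ring
      rw [heq]
      exact le_max_right _ _
  have main : ∀ ℓ, ℓ ≤ L → ((X ℓ)ᵀ * X ℓ = 1 ∧
      specNorm (Vᵀ * X ℓ)^2 * (1 + (max ε ((1-γ/4)^ℓ * (13/50)))^2) ≤
        (max ε ((1-γ/4)^ℓ * (13/50)))^2) := by
    intro ℓ
    induction ℓ with
    | zero =>
      intro _
      refine ⟨hX0, ?_⟩
      have h1 : specNorm (Vᵀ * X 0)^2 * (1 + (13/50:ℝ)^2) ≤ (13/50:ℝ)^2 := by
        nlinarith [specNorm_nonneg' (Vᵀ * X 0), hinit]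
      have h2 : (13/50:ℝ) ≤ max ε ((1-γ/4)^0 * (13/50)) := by
        refine le_trans (by norm_num) (le_max_right _ _)
      exact inv_mono (by norm_num) h2 h1
    | succ ℓ ih =>
      intro hlL
      obtain ⟨hXo, hXinv⟩ := ih (by omega)
      obtain ⟨hXc, ⟨R, hR⟩, ⟨C, hC⟩⟩ := hiter (ℓ+1) (by omega) hlL
      simp only [Nat.add_sub_cancel] at hR hC
      have hadm' := hadm (ℓ+1) (by omega) hlL
      simp only [Nat.add_sub_cancel] at hadm'
      refine ⟨hXc, ?_⟩
      have hstep := step_lemma A U V dU dV σk σk1 γ ε (max ε ((1-γ/4)^ℓ * (13/50)))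
        hU hV hUV hfull hA hσk hσk1 hσ1 hσkpos hσk1γ hγpos hγ1 hε0 hε
        (X ℓ) (X (ℓ+1)) (G (ℓ+1)) hXo hXc C hC hadm' (hτ0 ℓ) (hτhalf ℓ) hXinv
      exact inv_mono (le_trans hε0.le (le_max_left _ _)) (hτstep ℓ) hstep
  obtain ⟨-, hfin⟩ := main L le_rfl
  have hcL : (1-γ/4)^L * (13/50) ≤ ε := by
    have h1 : (1-γ/4:ℝ) ≤ Real.exp (-(γ/4)) := by
      have := Real.add_one_le_exp (-(γ/4)); linarith
    have h2 : (1-γ/4:ℝ)^L ≤ Real.exp (-(γ/4))^L := pow_le_pow_left₀ hc0 h1 L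
    have h3 : Real.exp (-(γ/4))^L = Real.exp ((L:ℝ) * (-(γ/4))) := (Real.exp_nat_mul _ L).symm
    have h4 : (L:ℝ) * (-(γ/4)) ≤ Real.log ε := by
      have hlogε : Real.log (1/ε) = - Real.log ε := by rw [one_div, Real.log_inv]
      rw [hlogε] at hL
      linarith
    have h5 : Real.exp ((L:ℝ) * (-(γ/4))) ≤ ε := by
      calc Real.exp ((L:ℝ) * (-(γ/4))) ≤ Real.exp (Real.log ε) := Real.exp_le_exp.2 h4
        _ = ε := Real.exp_log hε0
    nlinarith [pow_nonneg hc0 L, h2, h3.le, h3.ge, h5]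
  rw [max_eq_left hcL] at hfin
  refine le_of_sq_le_sq'' hε0.le ?_ (specNorm_nonneg' _)
  nlinarith [hfin, mul_nonneg (sq_nonneg (specNorm (Vᵀ * X L))) (sq_nonneg ε)]
end

section
/- (ρ-coherence of a projected Gaussian matrix.) There is an absolute constant C > 0 such that the following holds for all n ≥ 2 and k ≤ n. Let P be the orthogonal projection onto an (n−k)-dimensional subspace of ℝⁿ, and let H ∈ ℝ^{n×k} be a random matrix with i.i.d. entries distributed as N(0, 1/n). Then Pr{ ρ(PH) > C log n } ≤ 1/n⁵. -/
open Matrix MeasureTheory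

/-- The `ρ`-coherence `ρ(G) = (n/k) max_i ‖e_iᵀ G‖²` of an `n × k` matrix. -/
noncomputable def rho {n k : ℕ} (G : Matrix (Fin n) (Fin k) ℝ) : ℝ :=
  ⨆ i : Fin n, ((n : ℝ) / (k : ℝ)) * ∑ j, (G i j)^2

/-- The law of an `n × k` random matrix with i.i.d. `N(0, v)` entries, encoded as a
product of Gaussian measures on `(Fin n × Fin k) → ℝ`. -/
noncomputable def gaussMeasure (n k : ℕ) (v : ℝ) : Measure ((Fin n × Fin k) → ℝ) :=
  Measure.pi fun _ => ProbabilityTheory.gaussianReal 0 (Real.toNNReal v)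

/-- The matrix built from a sample point of `gaussMeasure`. -/
def matOf {n k : ℕ} (ω : (Fin n × Fin k) → ℝ) : Matrix (Fin n) (Fin k) ℝ :=
  Matrix.of fun i j => ω (i, j)

section Aux
open ProbabilityTheory Real
open scoped NNReal ENNReal


lemma gauss_pdf_shift {v : ℝ≥0} (hv : v ≠ 0) (c x : ℝ) :
    rexp (c * x) * gaussianPDFReal 0 v x = rexp (c^2 * v / 2) * gaussianPDFReal (c * v) v x := by
  have hv' : (0:ℝ) < (v:ℝ) := lt_of_le_of_ne (v.coe_nonneg) (by exact_mod_cast hv.symm)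
  unfold gaussianPDFReal
  rw [mul_left_comm, ← Real.exp_add, mul_left_comm, ← Real.exp_add]
  congr 2
  field_simp
  ring

lemma gauss_smul_eq {v : ℝ≥0} (hv : v ≠ 0) (c : ℝ) :
    (fun x => (gaussianPDFReal 0 v x).toNNReal • rexp (c * x))
        = fun x => rexp (c^2 * v / 2) * gaussianPDFReal (c * v) v x := by
  ext x
  rw [NNReal.smul_def, Real.coe_toNNReal _ (gaussianPDFReal_nonneg _ _ _),
    ← gauss_pdf_shift hv c x, smul_eq_mul, mul_comm]

lemma gauss_exp_int (c : ℝ) (v : ℝ≥0) :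
    Integrable (fun x => rexp (c * x)) (gaussianReal 0 v) := by
  by_cases hv : v = 0
  · subst hv
    rw [gaussianReal_zero_var]
    exact (integrable_const _).congr (ae_eq_dirac (fun x => rexp (c * x))).symm
  · rw [gaussianReal_of_var_ne_zero _ hv]
    have hm : Measurable fun x => (gaussianPDFReal 0 v x).toNNReal :=
      (measurable_gaussianPDFReal 0 v).real_toNNReal
    rw [show gaussianPDF 0 v = fun x => ((gaussianPDFReal 0 v x).toNNReal : ℝ≥0∞) from rfl,
      integrable_withDensity_iff_integrable_smul hm, gauss_smul_eq hv c]
    exact (integrable_gaussianPDFReal _ _).const_mul _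

lemma gauss_exp_val (c : ℝ) (v : ℝ≥0) :
    ∫ x, rexp (c * x) ∂(gaussianReal 0 v) = rexp (c^2 * v / 2) := by
  by_cases hv : v = 0
  · subst hv
    rw [gaussianReal_zero_var, integral_dirac]
    simp
  · rw [gaussianReal_of_var_ne_zero _ hv]
    have hm : Measurable fun x => (gaussianPDFReal 0 v x).toNNReal :=
      (measurable_gaussianPDFReal 0 v).real_toNNReal
    rw [show gaussianPDF 0 v = fun x => ((gaussianPDFReal 0 v x).toNNReal : ℝ≥0∞) from rfl,
      integral_withDensity_eq_integral_smul hm, gauss_smul_eq hv c,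
      integral_const_mul, integral_gaussianPDFReal_eq_one _ hv, mul_one]


lemma pi_gauss_exp {ι : Type*} [Fintype ι] (v : ℝ≥0) (a : ι → ℝ) :
    Integrable (fun ω : ι → ℝ => rexp (∑ p, a p * ω p))
      (Measure.pi fun _ => gaussianReal 0 v) ∧
    ∫ ω : ι → ℝ, rexp (∑ p, a p * ω p) ∂(Measure.pi fun _ => gaussianReal 0 v)
      = rexp ((∑ p, (a p)^2) * v / 2) := by
  letI : MeasureSpace ℝ := ⟨gaussianReal 0 v⟩
  haveI : IsProbabilityMeasure (volume : Measure ℝ) :=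
    (inferInstance : IsProbabilityMeasure (gaussianReal 0 v))
  have hpi : (Measure.pi fun _ : ι => gaussianReal 0 v) = (volume : Measure (ι → ℝ)) := by
    rw [volume_pi]; rfl
  have hfun : (fun ω : ι → ℝ => rexp (∑ p, a p * ω p))
      = fun ω : ι → ℝ => ∏ p, rexp (a p * ω p) := by
    ext ω; rw [← Real.exp_sum]
  constructor
  · rw [hpi, hfun]
    exact Integrable.fintype_prod (f := fun p x => rexp (a p * x)) (fun p => gauss_exp_int _ _)
  · rw [hpi, hfun, volume_pi, integral_fintype_prod_eq_prod (fun p x => rexp (a p * x))]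
    have h2 : ∏ p : ι, ∫ x : ℝ, rexp (a p * x) = ∏ p : ι, rexp ((a p)^2 * (v:ℝ) / 2) :=
      Finset.prod_congr rfl (fun p _ => gauss_exp_val _ _)
    rw [h2, ← Real.exp_sum]
    congr 1
    rw [Finset.sum_mul, Finset.sum_div]


lemma gauss_tail {ι : Type*} [Fintype ι] {v : ℝ≥0} (hv : v ≠ 0) (a : ι → ℝ)
    (ha : ∑ p, (a p)^2 ≤ 1) {t : ℝ} (ht : 0 ≤ t) :
    (Measure.pi fun _ : ι => gaussianReal 0 v) {ω | t ≤ ∑ p, a p * ω p}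
      ≤ ENNReal.ofReal (rexp (-(t^2) / (2*v))) := by
  set μ := Measure.pi fun _ : ι => gaussianReal 0 v with hμ
  have hv' : (0:ℝ) < (v:ℝ) := lt_of_le_of_ne (v.coe_nonneg) (by exact_mod_cast hv.symm)
  set l : ℝ := t / v with hl
  have hl0 : 0 ≤ l := div_nonneg ht hv'.le
  have hexp : (fun ω : ι → ℝ => rexp (l * ∑ p, a p * ω p))
      = fun ω : ι → ℝ => rexp (∑ p, (l * a p) * ω p) := by
    ext ω
    rw [Finset.mul_sum]
    simp_rw [mul_assoc]
  have hint : Integrable (fun ω : ι → ℝ => rexp (l * ∑ p, a p * ω p)) μ := by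
    rw [hexp]; exact (pi_gauss_exp v _).1
  have hch := measure_ge_le_exp_mul_mgf (X := fun ω : ι → ℝ => ∑ p, a p * ω p) (μ := μ) t hl0 hint
  have hmgf : mgf (fun ω : ι → ℝ => ∑ p, a p * ω p) μ l = rexp ((∑ p, (l * a p)^2) * v / 2) := by
    rw [mgf]
    rw [show (fun ω : ι → ℝ => rexp (l * ∑ p, a p * ω p)) = fun ω : ι → ℝ =>
      rexp (∑ p, (l * a p) * ω p) from hexp]
    exact (pi_gauss_exp v _).2
  have hbound : rexp (-l * t) * mgf (fun ω : ι → ℝ => ∑ p, a p * ω p) μ l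
      ≤ rexp (-(t^2) / (2*v)) := by
    rw [hmgf, ← Real.exp_add]
    apply Real.exp_le_exp.2
    have hs : (∑ p, (l * a p)^2) = l^2 * ∑ p, (a p)^2 := by
      rw [Finset.mul_sum]; congr 1; ext p; ring
    have h1 : (∑ p, (l * a p)^2) * v / 2 ≤ l^2 * v / 2 := by
      rw [hs]
      have : l^2 * (∑ p, (a p)^2) ≤ l^2 * 1 :=
        mul_le_mul_of_nonneg_left ha (sq_nonneg l)
      nlinarith
    have h2 : -l * t + l^2 * v / 2 = -(t^2) / (2*v) := by
      rw [hl]; field_simp; ring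
    linarith
  calc μ {ω | t ≤ ∑ p, a p * ω p}
      = ENNReal.ofReal ((μ {ω | t ≤ ∑ p, a p * ω p}).toReal) := by
        rw [ENNReal.ofReal_toReal (measure_ne_top _ _)]
    _ ≤ ENNReal.ofReal (rexp (-(t^2) / (2*v))) :=
        ENNReal.ofReal_le_ofReal (le_trans hch hbound)

end Aux

section Main
open ProbabilityTheory Real
open scoped NNReal ENNReal

/-- **ρ-coherence of a projected Gaussian matrix.**
There is an absolute constant `C > 0` such that for all `n ≥ 2`, `k ≤ n`, `P` the
orthogonal projection onto an `(n−k)`-dimensional subspace of ℝⁿ, and `H` a random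
`n × k` matrix with i.i.d. `N(0, 1/n)` entries, `Pr{ ρ(PH) > C log n } ≤ 1/n⁵`. -/
theorem rho_projected_gaussian :
    ∃ C : ℝ, 0 < C ∧
      ∀ (n k : ℕ), 2 ≤ n → k ≤ n →
      ∀ P : Matrix (Fin n) (Fin n) ℝ, Pᵀ = P → P * P = P → P.rank = n - k →
        gaussMeasure n k (1 / (n : ℝ))
          {ω | C * Real.log n < rho (P * matOf ω)} ≤
          ENNReal.ofReal (1 / (n : ℝ)^5) := by
  refine ⟨16, by norm_num, ?_⟩
  intro n k hn hk P hPt hPP _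
  -- basic positivity facts
  have hn1 : (1:ℝ) < n := by exact_mod_cast hn
  have hn0 : (0:ℝ) < n := by linarith
  have hn0' : (n:ℝ) ≠ 0 := hn0.ne'
  have hn2 : (2:ℝ) ≤ n := by exact_mod_cast hn
  have hlog : 0 < Real.log n := Real.log_pos hn1
  set v : ℝ≥0 := Real.toNNReal (1 / (n:ℝ)) with hvdef
  have hv : v ≠ 0 := by
    rw [hvdef, Ne, Real.toNNReal_eq_zero]
    push_neg
    positivity
  have hvr : (v:ℝ) = 1 / (n:ℝ) := Real.coe_toNNReal _ (by positivity)
  set t : ℝ := Real.sqrt (16 * Real.log n / n) with htdef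
  have harg : 0 ≤ 16 * Real.log n / n :=
    div_nonneg (mul_nonneg (by norm_num) hlog.le) hn0.le
  have ht0 : 0 ≤ t := Real.sqrt_nonneg _
  have ht2 : t^2 = 16 * Real.log n / n := Real.sq_sqrt harg
  -- the linear functionals
  set a : Fin n → Fin k → (Fin n × Fin k) → ℝ :=
    fun i j p => if p.2 = j then P i p.1 else 0 with hadef
  have Zeq : ∀ (ω : (Fin n × Fin k) → ℝ) (i : Fin n) (j : Fin k),
      (P * matOf ω) i j = ∑ p : Fin n × Fin k, a i j p * ω p := by
    intro ω i j
    rw [Matrix.mul_apply, Fintype.sum_prod_type]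
    apply Finset.sum_congr rfl
    intro l _
    simp [hadef, matOf, ite_mul]
  have hPsym : ∀ i l : Fin n, P l i = P i l := by
    intro i l
    have := congrArg (fun M : Matrix (Fin n) (Fin n) ℝ => M i l) hPt
    simpa [Matrix.transpose_apply] using this
  have hdiag : ∀ i : Fin n, ∑ l, (P i l)^2 = P i i := by
    intro i
    have h1 : (P * P) i i = P i i := by rw [hPP]
    rw [Matrix.mul_apply] at h1
    rw [← h1]
    apply Finset.sum_congr rfl
    intro l _
    rw [hPsym i l, sq]
  have hsq : ∀ (i : Fin n) (j : Fin k), ∑ p : Fin n × Fin k, (a i j p)^2 ≤ 1 := by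
    intro i j
    have hsum : ∑ p : Fin n × Fin k, (a i j p)^2 = ∑ l, (P i l)^2 := by
      rw [Fintype.sum_prod_type]
      apply Finset.sum_congr rfl
      intro l _
      simp [hadef, apply_ite (fun x : ℝ => x^2)]
    rw [hsum, hdiag i]
    have hle : (P i i)^2 ≤ ∑ l, (P i l)^2 :=
      Finset.single_le_sum (f := fun l => (P i l)^2) (fun l _ => sq_nonneg _)
        (Finset.mem_univ i)
    rw [hdiag i] at hle
    nlinarith
  -- the union bound sets
  set A : Fin n → Fin k → Set ((Fin n × Fin k) → ℝ) :=
    fun i j => {ω | t ≤ ∑ p : Fin n × Fin k, a i j p * ω p} with hAdef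
  set B : Fin n → Fin k → Set ((Fin n × Fin k) → ℝ) :=
    fun i j => {ω | t ≤ ∑ p : Fin n × Fin k, (-(a i j p)) * ω p} with hBdef
  -- inclusion
  have hincl : {ω : (Fin n × Fin k) → ℝ | 16 * Real.log n < rho (P * matOf ω)}
      ⊆ ⋃ i : Fin n, ⋃ j : Fin k, A i j ∪ B i j := by
    intro ω hω
    simp only [Set.mem_setOf_eq, rho] at hω
    haveI : Nonempty (Fin n) := ⟨⟨0, by omega⟩⟩
    obtain ⟨i, hi⟩ := exists_lt_of_lt_ciSup hω
    have hk0 : k ≠ 0 := by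
      rintro rfl
      simp only [Finset.univ_eq_empty, Finset.sum_empty, mul_zero] at hi
      linarith
    have hkpos : (0:ℝ) < k := by
      have : 0 < k := Nat.pos_of_ne_zero hk0
      exact_mod_cast this
    set S : ℝ := ∑ j, ((P * matOf ω) i j)^2 with hSdef
    have hS : 16 * Real.log n * ((k:ℝ)/n) < S := by
      have hmul := mul_lt_mul_of_pos_right hi (show (0:ℝ) < (k:ℝ)/n by positivity)
      have heq : (n:ℝ)/k * S * ((k:ℝ)/n) = S := by field_simp
      rw [heq] at hmul
      exact hmul
    have hex : ∃ j : Fin k, 16 * Real.log n / n < ((P * matOf ω) i j)^2 := by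
      by_contra hcon
      push_neg at hcon
      have : S ≤ ∑ _j : Fin k, 16 * Real.log n / n :=
        Finset.sum_le_sum fun j _ => hcon j
      rw [Finset.sum_const, Finset.card_univ, Fintype.card_fin, nsmul_eq_mul] at this
      have : S ≤ 16 * Real.log n * ((k:ℝ)/n) := by
        rw [show 16 * Real.log n * ((k:ℝ)/n) = (k:ℝ) * (16 * Real.log n / n) by ring]
        exact this
      linarith
    obtain ⟨j, hj⟩ := hex
    set Z : ℝ := (P * matOf ω) i j with hZdef
    have habs : t < |Z| := by
      nlinarith [sq_abs Z, abs_nonneg Z]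
    refine Set.mem_iUnion.2 ⟨i, Set.mem_iUnion.2 ⟨j, ?_⟩⟩
    rcases lt_abs.mp habs with h | h
    · left
      show t ≤ ∑ p : Fin n × Fin k, a i j p * ω p
      rw [← Zeq ω i j]
      exact h.le
    · right
      show t ≤ ∑ p : Fin n × Fin k, (-(a i j p)) * ω p
      have : ∑ p : Fin n × Fin k, (-(a i j p)) * ω p = -Z := by
        rw [hZdef, Zeq ω i j, ← Finset.sum_neg_distrib]
        apply Finset.sum_congr rfl
        intro p _
        ring
      rw [this]
      exact h.le
  -- tail bounds
  have hμ : gaussMeasure n k (1 / (n:ℝ)) = Measure.pi fun _ : Fin n × Fin k =>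
      gaussianReal 0 v := rfl
  have hexpval : -(t^2) / (2*(v:ℝ)) = -(8 * Real.log n) := by
    rw [ht2, hvr]
    field_simp
    ring
  have hr : rexp (-(t^2) / (2*(v:ℝ))) = ((n:ℝ)^8)⁻¹ := by
    rw [hexpval, Real.exp_neg]
    congr 1
    rw [show (8:ℝ) * Real.log n = Real.log ((n:ℝ)^8) by rw [Real.log_pow]; push_cast; ring]
    exact Real.exp_log (by positivity)
  have hA : ∀ i j, gaussMeasure n k (1 / (n:ℝ)) (A i j) ≤ ENNReal.ofReal (((n:ℝ)^8)⁻¹) := by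
    intro i j
    rw [hμ, ← hr]
    exact gauss_tail hv (a i j) (hsq i j) ht0
  have hB : ∀ i j, gaussMeasure n k (1 / (n:ℝ)) (B i j) ≤ ENNReal.ofReal (((n:ℝ)^8)⁻¹) := by
    intro i j
    rw [hμ, ← hr]
    have hsq' : ∑ p : Fin n × Fin k, ((-(a i j p)))^2 ≤ 1 := by
      simpa [neg_sq] using hsq i j
    exact gauss_tail hv (fun p => -(a i j p)) hsq' ht0
  -- put it together
  set c : ℝ≥0∞ := ENNReal.ofReal (((n:ℝ)^8)⁻¹) with hcdef
  calc gaussMeasure n k (1 / (n:ℝ)) {ω | 16 * Real.log n < rho (P * matOf ω)}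
      ≤ gaussMeasure n k (1 / (n:ℝ)) (⋃ i : Fin n, ⋃ j : Fin k, A i j ∪ B i j) :=
        measure_mono hincl
    _ ≤ ∑' i : Fin n, gaussMeasure n k (1 / (n:ℝ)) (⋃ j : Fin k, A i j ∪ B i j) :=
        measure_iUnion_le _
    _ ≤ ∑' i : Fin n, ∑' j : Fin k, gaussMeasure n k (1 / (n:ℝ)) (A i j ∪ B i j) :=
        ENNReal.tsum_le_tsum fun i => measure_iUnion_le _
    _ ≤ ∑' _i : Fin n, ∑' _j : Fin k, (c + c) := by
        refine ENNReal.tsum_le_tsum fun i => ENNReal.tsum_le_tsum fun j => ?_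
        exact le_trans (measure_union_le _ _) (add_le_add (hA i j) (hB i j))
    _ = (n : ℝ≥0∞) * ((k : ℝ≥0∞) * (c + c)) := by
        rw [tsum_fintype, tsum_fintype]
        simp [Finset.sum_const, Finset.card_univ, mul_assoc]
        ring
    _ ≤ ENNReal.ofReal (1 / (n:ℝ)^5) := by
        have hcc : c + c = ENNReal.ofReal (((n:ℝ)^8)⁻¹ + ((n:ℝ)^8)⁻¹) := by
          rw [hcdef, ENNReal.ofReal_add (by positivity) (by positivity)]
        rw [hcc, ← ENNReal.ofReal_natCast n, ← ENNReal.ofReal_natCast k,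
          ← ENNReal.ofReal_mul (by positivity), ← ENNReal.ofReal_mul (by positivity)]
        apply ENNReal.ofReal_le_ofReal
        have hk' : (k:ℝ) ≤ n := by exact_mod_cast hk
        have key : (n:ℝ) * ((k:ℝ) * (((n:ℝ)^8)⁻¹ + ((n:ℝ)^8)⁻¹)) = 2*(n:ℝ)*k / (n:ℝ)^8 := by
          field_simp
          ring
        rw [key, div_le_div_iff₀ (by positivity) (by positivity)]
        nlinarith [mul_le_mul_of_nonneg_left hk' (show (0:ℝ) ≤ 2*(n:ℝ)*(n:ℝ)^5 by positivity),
          mul_le_mul_of_nonneg_right hn2 (show (0:ℝ) ≤ (n:ℝ)^7 by positivity)]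

end Main
end

section
/- (Coherence of a subspace is controlled by any containing subspace.) Let X ∈ ℝ^{n×k} and Y ∈ ℝ^{n×k'} be orthonormal matrices such that the column span of X is contained in the column span of Y. Then μ(X) ≤ (k'/k) μ(Y). -/
open Matrix

/-- The coherence `μ(X) = max_i (n/m) ‖e_iᵀ X‖²` of an `n × m` matrix. -/
noncomputable def coher {n : ℕ} {m : Type*} [Fintype m] (X : Matrix (Fin n) m ℝ) : ℝ :=
  ⨆ i : Fin n, ((n : ℝ) / (Fintype.card m)) * ∑ j, (X i j)^2

lemma row_sq_le {n k k' : ℕ}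
    (Y : Matrix (Fin n) (Fin k') ℝ) (C : Matrix (Fin k') (Fin k) ℝ)
    (hC : Cᵀ * C = 1) (i : Fin n) :
    ∑ j, ((Y * C) i j)^2 ≤ ∑ l, (Y i l)^2 := by
  set r : Fin k' → ℝ := fun l => Y i l with hr
  set w : Fin k → ℝ := r ᵥ* C with hw
  have hrow : ∀ j, (Y * C) i j = w j := by
    intro j; simp [hw, Matrix.mul_apply, Matrix.vecMul, dotProduct, hr]
  have hgoal : ∑ j, ((Y * C) i j)^2 = w ⬝ᵥ w := by
    simp only [hrow]; simp [dotProduct, sq]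
  have hR : ∑ l, (Y i l)^2 = r ⬝ᵥ r := by
    simp [dotProduct, sq, hr]
  rw [hgoal, hR]
  set u : Fin k' → ℝ := C *ᵥ w with hu
  have huC : u ᵥ* C = w := by
    rw [hu, ← Matrix.vecMul_transpose, Matrix.vecMul_vecMul, hC, Matrix.vecMul_one]
  have hA : u ⬝ᵥ u = w ⬝ᵥ w := by
    rw [Matrix.dotProduct_mulVec, huC]
  have hB : u ⬝ᵥ r = w ⬝ᵥ w := by
    rw [dotProduct_comm, Matrix.dotProduct_mulVec, hw]
  have hcs : (u ⬝ᵥ r)^2 ≤ (u ⬝ᵥ u) * (r ⬝ᵥ r) := by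
    simpa [dotProduct, sq] using
      Finset.sum_mul_sq_le_sq_mul_sq Finset.univ u r
  rw [hB, hA] at hcs
  have hwnn : 0 ≤ w ⬝ᵥ w := Finset.sum_nonneg fun j _ => mul_self_nonneg _
  have hrnn : 0 ≤ r ⬝ᵥ r := Finset.sum_nonneg fun l _ => mul_self_nonneg _
  nlinarith [hcs, hwnn, hrnn]

/-- **Coherence of a subspace is controlled by any containing subspace.**
If `X ∈ ℝ^{n×k}` and `Y ∈ ℝ^{n×k'}` are orthonormal and the column span of `X` is
contained in the column span of `Y`, then `μ(X) ≤ (k'/k) μ(Y)`. -/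
theorem coherence_mono_of_subspace
    {n k k' : ℕ}
    (X : Matrix (Fin n) (Fin k) ℝ) (Y : Matrix (Fin n) (Fin k') ℝ)
    (hX : Xᵀ * X = 1) (hY : Yᵀ * Y = 1)
    (hsub : ∃ C : Matrix (Fin k') (Fin k) ℝ, X = Y * C) :
    coher X ≤ ((k' : ℝ) / (k : ℝ)) * coher Y := by
  obtain ⟨C, rfl⟩ := hsub
  have hC : Cᵀ * C = 1 := by
    rw [Matrix.transpose_mul, Matrix.mul_assoc, ← Matrix.mul_assoc Yᵀ, hY,
      Matrix.one_mul] at hX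
    exact hX
  have hYnn : 0 ≤ coher Y :=
    Real.iSup_nonneg fun i => by positivity
  have hkk' : 0 ≤ (k' : ℝ) / (k : ℝ) := by positivity
  have hrhs : 0 ≤ ((k' : ℝ) / (k : ℝ)) * coher Y := mul_nonneg hkk' hYnn
  conv_lhs => rw [coher]
  refine Real.iSup_le (fun i => ?_) hrhs
  have hrow := row_sq_le Y C hC i
  have hYi : ((n : ℝ) / (Fintype.card (Fin k'))) * ∑ l, (Y i l)^2 ≤ coher Y := by
    unfold coher
    exact le_ciSup (f := fun i : Fin n =>
      ((n : ℝ) / (Fintype.card (Fin k'))) * ∑ l, (Y i l)^2)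
      (Set.Finite.bddAbove (Set.finite_range _)) i
  simp only [Fintype.card_fin] at hYi ⊢
  rcases eq_or_ne k' 0 with hk' | hk'
  · subst hk'
    have : ∀ j, (Y * C) i j = 0 := by
      intro j; simp [Matrix.mul_apply]
    simp only [this]
    simp
  · have hk'R : (k' : ℝ) ≠ 0 := Nat.cast_ne_zero.mpr hk'
    calc ((n : ℝ) / (k : ℝ)) * ∑ j, ((Y * C) i j)^2
        ≤ ((n : ℝ) / (k : ℝ)) * ∑ l, (Y i l)^2 := by
          apply mul_le_mul_of_nonneg_left hrow (by positivity)
      _ = ((k' : ℝ) / (k : ℝ)) * (((n : ℝ) / (k' : ℝ)) * ∑ l, (Y i l)^2) := by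
          have hscal : ((k' : ℝ) / (k : ℝ)) * ((n : ℝ) / (k' : ℝ)) = (n : ℝ) / (k : ℝ) := by
            rw [div_mul_div_comm, mul_comm (k : ℝ) (k' : ℝ),
              mul_div_mul_left _ _ hk'R]
          rw [← mul_assoc, hscal]
      _ ≤ ((k' : ℝ) / (k : ℝ)) * coher Y :=
          mul_le_mul_of_nonneg_left hYi hkk'
end
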